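/- arXiv:1109.1990 — 2 statements merged into one kernel-verified Lean document; each statement's English description precedes it below -/
import Mathlib

section
/- Let P ∈ R^{k×p} have columns of unit ℓ2-norm. Then for all w ∈ R^p, ‖w‖_2 ≤ ‖P·Diag(w)‖_* ≤ ‖w‖_1. -/
noncomputable def traceNorm {n p : ℕ} (M : Matrix (Fin n) (Fin p) ℝ) : ℝ :=
  ((Matrix.posSemidef_conjTranspose_mul_self M).1.eigenvectorUnitary.1 *
    Matrix.diagonal (Real.sqrt ∘ (Matrix.posSemidef_conjTranspose_mul_self M).1.eigenvalues) *
    (star (Matrix.posSemidef_conjTranspose_mul_self M).1.eigenvectorUnitary :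
      Matrix (Fin p) (Fin p) ℝ)).trace

open Matrix in
lemma psd_apply_sq_le {n : Type*} [Fintype n] [DecidableEq n]
    {B : Matrix n n ℝ} (hB : B.PosSemidef) (i j : n) :
    B i j ^ 2 ≤ B i i * B j j := by
  have hsym : ∀ a b, B b a = B a b := fun a b => by
    have := hB.1
    rw [Matrix.IsHermitian] at this
    conv_lhs => rw [← this]
    simp [Matrix.conjTranspose_apply]
  rcases eq_or_ne i j with rfl | hij
  · rw [sq]
  have key : ∀ t : ℝ, 0 ≤ B i i * (t * t) + (2 * B i j) * t + B j j := by
    intro t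
    have h := hB.dotProduct_mulVec_nonneg (Pi.single i t + Pi.single j 1)
    rw [star_trivial, Matrix.mulVec_add, dotProduct_add, add_dotProduct, add_dotProduct,
      Matrix.mulVec_single, Matrix.mulVec_single] at h
    simp only [single_dotProduct, Pi.smul_apply, MulOpposite.smul_eq_mul_unop,
      MulOpposite.unop_op, Matrix.col_apply] at h
    rw [hsym i j] at h
    linarith [h]
  have hd := discrim_le_zero key
  rw [discrim] at hd
  nlinarith [hd]

open Matrix in
lemma psd_diag_nonneg {n : Type*} [Fintype n] [DecidableEq n]
    {B : Matrix n n ℝ} (hB : B.PosSemidef) (i : n) : 0 ≤ B i i := by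
  have h := hB.dotProduct_mulVec_nonneg (Pi.single i 1)
  rw [star_trivial, Matrix.mulVec_single] at h
  simpa using h

theorem trace_lasso_between_l2_l1 {k p : ℕ} (P : Matrix (Fin k) (Fin p) ℝ)
    (hP : ∀ i : Fin p, ∑ j, P j i ^ 2 = 1) (w : Fin p → ℝ) :
    Real.sqrt (∑ i, w i ^ 2) ≤ traceNorm (P * Matrix.diagonal w) ∧
      traceNorm (P * Matrix.diagonal w) ≤ ∑ i, |w i| := by
  classical
  set M := P * Matrix.diagonal w with hM
  set S := M.conjTranspose * M with hS
  have hSpsd := Matrix.posSemidef_conjTranspose_mul_self M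
  set B := hSpsd.1.eigenvectorUnitary.1 *
    Matrix.diagonal (Real.sqrt ∘ hSpsd.1.eigenvalues) *
    (star hSpsd.1.eigenvectorUnitary : Matrix (Fin p) (Fin p) ℝ) with hB
  have hBpsd : B.PosSemidef := by
    have hD : (Matrix.diagonal (Real.sqrt ∘ hSpsd.1.eigenvalues)).PosSemidef :=
      Matrix.PosSemidef.diagonal (fun i => Real.sqrt_nonneg _)
    have := hD.mul_mul_conjTranspose_same (hSpsd.1.eigenvectorUnitary.1)
    simpa [hB, Matrix.star_eq_conjTranspose] using this
  have hBsym : ∀ a b, B b a = B a b := fun a b => by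
    have := hBpsd.1
    rw [Matrix.IsHermitian] at this
    conv_lhs => rw [← this]
    simp [Matrix.conjTranspose_apply]
  have hBB : B * B = S := by
    have hU : (star hSpsd.1.eigenvectorUnitary : Matrix (Fin p) (Fin p) ℝ) *
        hSpsd.1.eigenvectorUnitary.1 = 1 := Unitary.coe_star_mul_self _
    have hDD : Matrix.diagonal (Real.sqrt ∘ hSpsd.1.eigenvalues) *
        Matrix.diagonal (Real.sqrt ∘ hSpsd.1.eigenvalues) =
        Matrix.diagonal (RCLike.ofReal ∘ hSpsd.1.eigenvalues) := by
      rw [Matrix.diagonal_mul_diagonal]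
      congr 1; funext i
      simp
      exact Real.mul_self_sqrt (hSpsd.eigenvalues_nonneg i)
    have hspec := hSpsd.1.spectral_theorem
    rw [Unitary.conjStarAlgAut_apply] at hspec
    rw [hB]
    calc _ = hSpsd.1.eigenvectorUnitary.1 *
          Matrix.diagonal (Real.sqrt ∘ hSpsd.1.eigenvalues) *
          ((star hSpsd.1.eigenvectorUnitary : Matrix (Fin p) (Fin p) ℝ) *
            hSpsd.1.eigenvectorUnitary.1) *
          Matrix.diagonal (Real.sqrt ∘ hSpsd.1.eigenvalues) *
          (star hSpsd.1.eigenvectorUnitary : Matrix (Fin p) (Fin p) ℝ) := by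
            simp only [Matrix.mul_assoc]
      _ = _ := by
            rw [hU, Matrix.mul_one,
              Matrix.mul_assoc (hSpsd.1.eigenvectorUnitary.1)
                (Matrix.diagonal (Real.sqrt ∘ hSpsd.1.eigenvalues))
                (Matrix.diagonal (Real.sqrt ∘ hSpsd.1.eigenvalues)), hDD]
            exact hspec.symm
  -- diagonal entries of S
  have hSdiag : ∀ i, S i i = w i ^ 2 := by
    intro i
    have hMentry : ∀ j i', M j i' = P j i' * w i' := by
      intro j i'
      simp [hM, Matrix.mul_apply, Matrix.diagonal_apply, Finset.sum_ite_eq]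
    simp only [hS, Matrix.mul_apply, Matrix.conjTranspose_apply, star_trivial, hMentry]
    have : ∑ j, P j i * w i * (P j i * w i) = (∑ j, P j i ^ 2) * w i ^ 2 := by
      rw [Finset.sum_mul]; apply Finset.sum_congr rfl; intro j _; ring
    rw [this, hP i, one_mul]
  -- S i i = ∑ j, (B i j)^2
  have hSsum : ∀ i, S i i = ∑ j, B i j ^ 2 := by
    intro i
    rw [← hBB, Matrix.mul_apply]
    apply Finset.sum_congr rfl
    intro j _
    rw [hBsym j i, sq]
  constructor
  · -- lower bound: sqrt (∑ w i ^2) ≤ trace B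
    have htr : Matrix.trace S = ∑ i, w i ^ 2 := by
      simp [Matrix.trace, Matrix.diag, hSdiag]
    have h1 : ∑ i, w i ^ 2 ≤ (∑ i, B i i) ^ 2 := by
      calc ∑ i, w i ^ 2 = ∑ i, ∑ j, B i j ^ 2 := by
            apply Finset.sum_congr rfl; intro i _; rw [← hSdiag, hSsum]
        _ ≤ ∑ i, ∑ j, B i i * B j j := by
            apply Finset.sum_le_sum; intro i _
            apply Finset.sum_le_sum; intro j _
            exact psd_apply_sq_le hBpsd i j
        _ = (∑ i, B i i) ^ 2 := by
            rw [sq, Finset.sum_mul_sum]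
    have htrB : 0 ≤ ∑ i, B i i := Finset.sum_nonneg fun i _ => psd_diag_nonneg hBpsd i
    have h2 := Real.sqrt_le_sqrt h1
    rw [Real.sqrt_sq htrB] at h2
    have hTN : traceNorm M = ∑ i, B i i := by
      show B.trace = _
      simp [Matrix.trace, Matrix.diag]
    rw [hTN]
    exact h2
  · -- upper bound
    have hTN : traceNorm M = ∑ i, B i i := by
      show B.trace = _
      simp [Matrix.trace, Matrix.diag]
    rw [hTN]
    apply Finset.sum_le_sum
    intro i _
    have h1 : B i i ^ 2 ≤ S i i := by
      rw [hSsum i]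
      exact Finset.single_le_sum (f := fun j => B i j ^ 2)
        (fun j _ => sq_nonneg _) (Finset.mem_univ i)
    rw [hSdiag i, ← sq_abs (w i)] at h1
    have h2 := Real.sqrt_le_sqrt h1
    rwa [Real.sqrt_sq (psd_diag_nonneg hBpsd i), Real.sqrt_sq (abs_nonneg _)] at h2
end

section
/- Let P ∈ R^{k×p} have columns of unit ℓ2-norm. Then for all u ∈ R^p, the dual norm of Ω_P(w) = ‖P·Diag(w)‖_* satisfies ‖u‖_∞ ≤ Ω_P*(u) ≤ ‖P‖_{op}·‖u‖_∞. -/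
noncomputable def opNorm {k p : ℕ} (M : Matrix (Fin k) (Fin p) ℝ) : ℝ :=
  ‖LinearMap.toContinuousLinearMap (Matrix.toEuclideanLin M)‖

open Matrix Real Finset

lemma traceNorm_eq_cfc {n p : ℕ} (M : Matrix (Fin n) (Fin p) ℝ) :
    traceNorm M = (cfc Real.sqrt (Mᴴ * M)).trace := by
  rw [(Matrix.posSemidef_conjTranspose_mul_self M).1.cfc_eq, IsHermitian.cfc,
    Unitary.conjStarAlgAut_apply]
  rfl

open scoped MatrixOrder in
lemma cfc_sqrt_sq_psd {p : ℕ} {B : Matrix (Fin p) (Fin p) ℝ} (hB : B.PosSemidef) :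
    cfc Real.sqrt (B ^ 2) = B := by
  have h0 : 0 ≤ B := hB.nonneg
  have hsq : B ^ 2 = star B * B := by rw [sq, star_eq_conjTranspose, hB.1.eq]
  have h2 : 0 ≤ B ^ 2 := by rw [hsq]; exact star_mul_self_nonneg B
  conv_rhs => rw [← CFC.sqrt_sq B h0]
  rw [CFC.sqrt_eq_cfc, cfc_nnreal_eq_real _ (B ^ 2) h2]
  congr 1
  funext x
  rw [Real.sqrt]

/-- dot product equals Euclidean inner product -/
lemma dot_eq_inner {n : ℕ} (a b : Fin n → ℝ) :
    a ⬝ᵥ b = inner ℝ ((WithLp.equiv 2 _).symm a : EuclideanSpace ℝ (Fin n))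
      ((WithLp.equiv 2 _).symm b) := by
  simp [dotProduct, PiLp.inner_apply, RCLike.inner_apply, mul_comm]

lemma sqrt_dot_self {n : ℕ} (a : Fin n → ℝ) :
    Real.sqrt (a ⬝ᵥ a) = ‖((WithLp.equiv 2 _).symm a : EuclideanSpace ℝ (Fin n))‖ := by
  rw [EuclideanSpace.norm_eq]
  congr 1
  simp [dotProduct, sq, Real.norm_eq_abs, abs_mul_abs_self]

lemma dot_cs {n : ℕ} (a b : Fin n → ℝ) :
    a ⬝ᵥ b ≤ Real.sqrt (a ⬝ᵥ a) * Real.sqrt (b ⬝ᵥ b) := by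
  rw [dot_eq_inner, sqrt_dot_self, sqrt_dot_self]
  exact real_inner_le_norm _ _

lemma dotSelf_mulVec {k p : ℕ} (A : Matrix (Fin k) (Fin p) ℝ) (x : Fin p → ℝ) :
    (A *ᵥ x) ⬝ᵥ (A *ᵥ x) = x ⬝ᵥ ((Aᴴ * A) *ᵥ x) := by
  have h : x ⬝ᵥ ((Aᴴ * A) *ᵥ x) = (A *ᵥ x) ⬝ᵥ (A *ᵥ x) := by
    rw [← Matrix.mulVec_mulVec, Matrix.dotProduct_mulVec x Aᴴ, Matrix.vecMul_conjTranspose]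
    simp
  exact h.symm

lemma opNorm_mulVec_le {k p : ℕ} (P : Matrix (Fin k) (Fin p) ℝ) (y : Fin p → ℝ) :
    Real.sqrt ((P *ᵥ y) ⬝ᵥ (P *ᵥ y)) ≤ opNorm P * Real.sqrt (y ⬝ᵥ y) := by
  rw [sqrt_dot_self, sqrt_dot_self]
  have h := (LinearMap.toContinuousLinearMap (Matrix.toEuclideanLin P)).le_opNorm
    ((WithLp.equiv 2 _).symm y)
  simpa [opNorm, Matrix.toEuclideanLin_toLp, Matrix.toLin'_apply] using h

/-- Key Hölder-type inequality. -/
lemma trace_le_traceNorm_mul {k p : ℕ} (A B : Matrix (Fin k) (Fin p) ℝ) (c : ℝ)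
    (hB : ∀ x : Fin p → ℝ,
      Real.sqrt ((B *ᵥ x) ⬝ᵥ (B *ᵥ x)) ≤ c * Real.sqrt (x ⬝ᵥ x)) :
    (Aᴴ * B).trace ≤ traceNorm A * c := by
  have hG := Matrix.posSemidef_conjTranspose_mul_self A
  set hH : (Aᴴ * A).IsHermitian := hG.1 with hHdef
  set U : Matrix (Fin p) (Fin p) ℝ := (hH.eigenvectorUnitary : Matrix (Fin p) (Fin p) ℝ) with hUdef
  set lam : Fin p → ℝ := hH.eigenvalues with hlamdef
  set w : Fin p → Fin p → ℝ := fun i => ⇑(hH.eigenvectorBasis i) with hwdef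
  have hU1 : U * star U = 1 := Matrix.mem_unitaryGroup_iff.mp hH.eigenvectorUnitary.2
  have hU2 : star U * U = 1 := Matrix.mem_unitaryGroup_iff'.mp hH.eigenvectorUnitary.2
  -- dot products of eigenvectors
  have hww : ∀ i, (w i) ⬝ᵥ (w i) = 1 := by
    intro i
    rw [dot_eq_inner]
    have h1 : ((WithLp.equiv 2 (Fin p → ℝ)).symm (w i)) = hH.eigenvectorBasis i := rfl
    rw [h1, real_inner_self_eq_norm_sq, (hH.eigenvectorBasis).orthonormal.1 i]
    norm_num
  -- ‖A w i‖² = lam i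
  have hAw : ∀ i, (A *ᵥ w i) ⬝ᵥ (A *ᵥ w i) = lam i := by
    intro i
    rw [dotSelf_mulVec, hH.mulVec_eigenvectorBasis i]
    rw [dotProduct_smul]
    change lam i • (w i ⬝ᵥ w i) = lam i
    simp [hww i]
  -- trace identity
  have htr : (Aᴴ * B).trace = ∑ i, (A *ᵥ w i) ⬝ᵥ (B *ᵥ w i) := by
    have h1 : (A * U)ᴴ * (B * U) = star U * (Aᴴ * B) * U := by
      rw [Matrix.conjTranspose_mul, Matrix.star_eq_conjTranspose]
      simp only [Matrix.mul_assoc]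
    have h2 : ((A * U)ᴴ * (B * U)).trace = (Aᴴ * B).trace := by
      rw [h1, Matrix.trace_mul_cycle, ← Matrix.mul_assoc, hU1, Matrix.one_mul]
    rw [← h2]
    rw [Matrix.trace]
    apply Finset.sum_congr rfl
    intro i _
    simp only [Matrix.diag_apply, Matrix.mul_apply, Matrix.conjTranspose_apply,
      dotProduct, Matrix.mulVec, star_trivial]
    apply Finset.sum_congr rfl
    intro j _
    congr 1 <;>
    · simp only [Matrix.mul_apply, dotProduct, hUdef]
      apply Finset.sum_congr rfl
      intro l _
      rw [Matrix.IsHermitian.eigenvectorUnitary_apply]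
      rfl
  -- trace norm identity
  have htn : traceNorm A = ∑ i, Real.sqrt (lam i) := by
    rw [traceNorm]
    change (U * Matrix.diagonal (Real.sqrt ∘ lam) * star U).trace = _
    rw [Matrix.trace_mul_cycle, hU2, Matrix.one_mul, Matrix.trace_diagonal]
    simp
  rw [htr, htn, Finset.sum_mul]
  apply Finset.sum_le_sum
  intro i _
  calc (A *ᵥ w i) ⬝ᵥ (B *ᵥ w i)
      ≤ Real.sqrt ((A *ᵥ w i) ⬝ᵥ (A *ᵥ w i)) * Real.sqrt ((B *ᵥ w i) ⬝ᵥ (B *ᵥ w i)) :=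
        dot_cs _ _
    _ = Real.sqrt (lam i) * Real.sqrt ((B *ᵥ w i) ⬝ᵥ (B *ᵥ w i)) := by rw [hAw i]
    _ ≤ Real.sqrt (lam i) * c := by
        apply mul_le_mul_of_nonneg_left _ (Real.sqrt_nonneg _)
        have := hB (w i)
        rwa [hww i, Real.sqrt_one, mul_one] at this

theorem dual_norm_linf_bounds {k p : ℕ} (P : Matrix (Fin k) (Fin p) ℝ)
    (hP : ∀ i : Fin p, ∑ j, P j i ^ 2 = 1) (u : Fin p → ℝ) :
    (⨆ i, |u i|) ≤
        sSup {x : ℝ | ∃ v : Fin p → ℝ,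
          traceNorm (P * Matrix.diagonal v) ≤ 1 ∧ x = ∑ i, u i * v i} ∧
      sSup {x : ℝ | ∃ v : Fin p → ℝ,
          traceNorm (P * Matrix.diagonal v) ≤ 1 ∧ x = ∑ i, u i * v i} ≤
        opNorm P * ⨆ i, |u i| := by
  set S := {x : ℝ | ∃ v : Fin p → ℝ,
    traceNorm (P * Matrix.diagonal v) ≤ 1 ∧ x = ∑ i, u i * v i} with hS
  set m : ℝ := ⨆ i, |u i| with hm
  have hm0 : 0 ≤ m := Real.iSup_nonneg fun i => abs_nonneg _
  have hmi : ∀ i, |u i| ≤ m := fun i =>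
    le_ciSup (f := fun i => |u i|) (Set.Finite.bddAbove (Set.finite_range _)) i
  -- (Pᴴ P) i i = 1
  have hPP : ∀ i, (Pᴴ * P) i i = 1 := by
    intro i
    rw [Matrix.mul_apply]
    rw [← hP i]
    apply Finset.sum_congr rfl
    intro j _
    rw [Matrix.conjTranspose_apply, star_trivial, sq]
  -- the operator norm bound for B = P * diagonal u
  have hBbound : ∀ x : Fin p → ℝ,
      Real.sqrt (((P * Matrix.diagonal u) *ᵥ x) ⬝ᵥ ((P * Matrix.diagonal u) *ᵥ x))
        ≤ (opNorm P * m) * Real.sqrt (x ⬝ᵥ x) := by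
    intro x
    rw [← Matrix.mulVec_mulVec]
    calc Real.sqrt ((P *ᵥ (Matrix.diagonal u *ᵥ x)) ⬝ᵥ (P *ᵥ (Matrix.diagonal u *ᵥ x)))
        ≤ opNorm P * Real.sqrt ((Matrix.diagonal u *ᵥ x) ⬝ᵥ (Matrix.diagonal u *ᵥ x)) :=
          opNorm_mulVec_le _ _
      _ ≤ opNorm P * (m * Real.sqrt (x ⬝ᵥ x)) := by
          apply mul_le_mul_of_nonneg_left _ (norm_nonneg _)
          have hd : (Matrix.diagonal u *ᵥ x) ⬝ᵥ (Matrix.diagonal u *ᵥ x)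
              ≤ m ^ 2 * (x ⬝ᵥ x) := by
            simp only [Matrix.mulVec_diagonal, dotProduct, Finset.mul_sum]
            apply Finset.sum_le_sum
            intro i _
            have h1 : (u i * x i) * (u i * x i) = u i ^ 2 * (x i * x i) := by ring
            rw [h1]
            apply mul_le_mul_of_nonneg_right _ (mul_self_nonneg _)
            calc u i ^ 2 = |u i| ^ 2 := (sq_abs _).symm
              _ ≤ m ^ 2 := by
                  apply pow_le_pow_left₀ (abs_nonneg _) (hmi i)
          calc Real.sqrt ((Matrix.diagonal u *ᵥ x) ⬝ᵥ (Matrix.diagonal u *ᵥ x))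
              ≤ Real.sqrt (m ^ 2 * (x ⬝ᵥ x)) := Real.sqrt_le_sqrt hd
            _ = m * Real.sqrt (x ⬝ᵥ x) := by
                rw [Real.sqrt_mul (sq_nonneg _), Real.sqrt_sq hm0]
      _ = (opNorm P * m) * Real.sqrt (x ⬝ᵥ x) := by ring
  -- every element of S is ≤ opNorm P * m
  have hub : ∀ x ∈ S, x ≤ opNorm P * m := by
    rintro x ⟨v, hv, rfl⟩
    have key := trace_le_traceNorm_mul (P * Matrix.diagonal v) (P * Matrix.diagonal u)
      (opNorm P * m) hBbound
    have htr : ((P * Matrix.diagonal v)ᴴ * (P * Matrix.diagonal u)).trace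
        = ∑ i, u i * v i := by
      have h1 : (P * Matrix.diagonal v)ᴴ * (P * Matrix.diagonal u)
          = Matrix.diagonal v * (Pᴴ * P) * Matrix.diagonal u := by
        rw [Matrix.conjTranspose_mul, Matrix.diagonal_conjTranspose]
        simp only [Matrix.mul_assoc, star_trivial, Pi.star_def]
      rw [h1, Matrix.trace]
      apply Finset.sum_congr rfl
      intro i _
      rw [Matrix.diag_apply, Matrix.mul_diagonal, Matrix.diagonal_mul, hPP i]
      ring
    rw [htr] at key
    calc (∑ i, u i * v i) ≤ traceNorm (P * Matrix.diagonal v) * (opNorm P * m) := key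
      _ ≤ opNorm P * m := mul_le_of_le_one_left (mul_nonneg (norm_nonneg _) hm0) hv
  have hbdd : BddAbove S := ⟨opNorm P * m, hub⟩
  -- 0 ∈ S
  have h0S : (0 : ℝ) ∈ S := by
    refine ⟨0, ?_, by simp⟩
    have hz : traceNorm (P * Matrix.diagonal (0 : Fin p → ℝ)) = 0 := by
      have h1 : P * Matrix.diagonal (0 : Fin p → ℝ) = 0 := by
        ext a b; simp [Matrix.mul_apply, Matrix.diagonal_apply]
      rw [h1, traceNorm]
      change traceNorm (0 : Matrix (Fin k) (Fin p) ℝ) = 0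
      rw [traceNorm_eq_cfc]
      simp
    rw [hz]; norm_num
  constructor
  · -- lower bound
    rcases isEmpty_or_nonempty (Fin p) with hpe | hpn
    · rw [hm, Real.iSup_of_isEmpty]
      exact le_csSup hbdd h0S
    · apply ciSup_le
      intro i
      apply le_csSup hbdd
      set s : ℝ := if 0 ≤ u i then 1 else -1 with hsd
      have hs2 : s * s = 1 := by
        rcases le_or_gt 0 (u i) with h | h <;> simp [hsd, h, not_le.mpr]
      have hsu : u i * s = |u i| := by
        rcases le_or_gt 0 (u i) with h | h
        · rw [abs_of_nonneg h]; simp [hsd, h]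
        · rw [abs_of_neg h]; simp [hsd, not_le.mpr h]
      refine ⟨fun j => if j = i then s else 0, ?_, ?_⟩
      · -- traceNorm = 1
        set v : Fin p → ℝ := fun j => if j = i then s else 0 with hvd
        set d : Fin p → ℝ := fun j => if j = i then (1 : ℝ) else 0 with hdd
        have hMM : (P * Matrix.diagonal v)ᴴ * (P * Matrix.diagonal v)
            = Matrix.diagonal d := by
          have h1 : (P * Matrix.diagonal v)ᴴ * (P * Matrix.diagonal v)
              = Matrix.diagonal v * (Pᴴ * P) * Matrix.diagonal v := by
            rw [Matrix.conjTranspose_mul, Matrix.diagonal_conjTranspose]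
            simp only [Matrix.mul_assoc, star_trivial, Pi.star_def]
          rw [h1]
          ext a b
          rw [Matrix.mul_diagonal, Matrix.diagonal_mul]
          by_cases ha : a = i
          · by_cases hb : b = i
            · rw [ha, hb, hPP i]
              simp [hvd, hdd, hs2]
            · rw [ha]
              have hib : ¬ (i = b) := fun h => hb h.symm
              simp [hvd, hdd, hb, Matrix.diagonal_apply, hib]
          · simp [hvd, hdd, ha, Matrix.diagonal_apply]
        have hdpsd : (Matrix.diagonal d).PosSemidef := by
          apply Matrix.posSemidef_diagonal_iff.mpr
          intro j
          by_cases hj : j = i <;> simp [hdd, hj]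
        have hsq : Matrix.diagonal d ^ 2
            = (P * Matrix.diagonal v)ᴴ * (P * Matrix.diagonal v) := by
          have hd2 : (fun j => d j * d j) = d := funext fun j => by
            by_cases hj : j = i <;> simp [hdd, hj]
          rw [hMM, sq, Matrix.diagonal_mul_diagonal, hd2]
        rw [traceNorm_eq_cfc, ← hsq, cfc_sqrt_sq_psd hdpsd,
          Matrix.trace_diagonal]
        rw [Finset.sum_ite_eq' Finset.univ i (fun _ => (1:ℝ))]
        simp
      · -- sum = |u i|
        have hsum : (∑ j, u j * (if j = i then s else 0)) = u i * s := by
          rw [Finset.sum_eq_single i (fun b _ hb => by simp [hb])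
            (fun h => absurd (Finset.mem_univ i) h)]
          simp
        rw [hsum, hsu]
  · -- upper bound
    exact csSup_le ⟨0, h0S⟩ hub
end
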